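/- arXiv:2012.03860 — 6 statements merged into one kernel-verified Lean document; each statement's English description precedes it below -/
import Mathlib

section
/- Let C be a compression function and Ĉ its effective compression function. Let V₁ and V₂ be independent real-valued random variables on a probability space, each almost surely strictly positive, and suppose that Ĉ(V₁|V₂), Ĉ(V₂|V₁), and the product Ĉ(V₁|V₂)·Ĉ(V₂|V₁) are all integrable. Then Cov(Ĉ(V₁|V₂), Ĉ(V₂|V₁)) ≤ 0; equivalently, E[Ĉ(V₁|V₂)·Ĉ(V₂|V₁)] ≤ E[Ĉ(V₁|V₂)]·E[Ĉ(V₂|V₁)]. -/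
open MeasureTheory

/-- A compression function: nonnegative, nondecreasing, and concave on (0, ∞). -/
def IsCompressionFunction (C : ℝ → ℝ) : Prop :=
  (∀ v ∈ Set.Ioi (0 : ℝ), 0 ≤ C v) ∧ MonotoneOn C (Set.Ioi (0 : ℝ)) ∧
    ConcaveOn ℝ (Set.Ioi (0 : ℝ)) C

/-- The effective compression function Ĉ(v₁|v₂) = (C(v₁+v₂)/(v₁+v₂))·v₁. -/
noncomputable def ECF (C : ℝ → ℝ) (v₁ v₂ : ℝ) : ℝ :=
  C (v₁ + v₂) / (v₁ + v₂) * v₁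

open ProbabilityTheory

/-- Chebyshev-type covariance inequality from a.e. pairwise negative association. -/
lemma chebyshev_aux {α : Type*} [MeasurableSpace α] (ν : Measure α) [IsProbabilityMeasure ν]
    (u w : α → ℝ) (hu : Integrable u ν) (hw : Integrable w ν)
    (huw : Integrable (fun a => u a * w a) ν)
    (h : ∀ᵐ p ∂(ν.prod ν), (u p.1 - u p.2) * (w p.1 - w p.2) ≤ 0) :
    ∫ a, u a * w a ∂ν ≤ (∫ a, u a ∂ν) * ∫ a, w a ∂ν := by
  have hA : Integrable (fun p : α × α => u p.1 * w p.1) (ν.prod ν) := by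
    simpa using huw.mul_prod (integrable_const (1:ℝ))
  have hB : Integrable (fun p : α × α => u p.2 * w p.2) (ν.prod ν) := by
    simpa using (integrable_const (1:ℝ)).mul_prod huw
  have hCc : Integrable (fun p : α × α => u p.1 * w p.2) (ν.prod ν) := hu.mul_prod hw
  have hD : Integrable (fun p : α × α => w p.1 * u p.2) (ν.prod ν) := hw.mul_prod hu
  have hI : ∫ p : α × α, ((u p.1 * w p.1 + u p.2 * w p.2) - (u p.1 * w p.2 + w p.1 * u p.2))
      ∂(ν.prod ν) ≤ 0 := by
    refine integral_nonpos_of_ae ?_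
    filter_upwards [h] with p hp
    show (u p.1 * w p.1 + u p.2 * w p.2) - (u p.1 * w p.2 + w p.1 * u p.2) ≤ 0
    nlinarith [hp]
  have hAB : Integrable (fun p : α × α => u p.1 * w p.1 + u p.2 * w p.2) (ν.prod ν) := hA.add hB
  have hCD : Integrable (fun p : α × α => u p.1 * w p.2 + w p.1 * u p.2) (ν.prod ν) := hCc.add hD
  have hI2 : (∫ p : α × α, (u p.1 * w p.1 + u p.2 * w p.2) ∂(ν.prod ν)) -
      ∫ p : α × α, (u p.1 * w p.2 + w p.1 * u p.2) ∂(ν.prod ν) ≤ 0 := by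
    rw [← integral_sub hAB hCD]; exact hI
  rw [integral_add hA hB, integral_add hCc hD] at hI2
  have e1 : ∫ p : α × α, u p.1 * w p.1 ∂(ν.prod ν) = ∫ a, u a * w a ∂ν := by
    have := integral_prod_mul (μ := ν) (ν := ν) (fun a => u a * w a) (fun _ => (1:ℝ))
    simpa using this
  have e2 : ∫ p : α × α, u p.2 * w p.2 ∂(ν.prod ν) = ∫ a, u a * w a ∂ν := by
    have := integral_prod_mul (μ := ν) (ν := ν) (fun _ => (1:ℝ)) (fun a => u a * w a)
    simpa using this
  have e3 : ∫ p : α × α, u p.1 * w p.2 ∂(ν.prod ν) = (∫ a, u a ∂ν) * ∫ a, w a ∂ν :=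
    integral_prod_mul u w
  have e4 : ∫ p : α × α, w p.1 * u p.2 ∂(ν.prod ν) = (∫ a, w a ∂ν) * ∫ a, u a ∂ν :=
    integral_prod_mul w u
  rw [e1, e2, e3, e4] at hI2
  nlinarith [hI2]

/-- slope inequality for a nonnegative concave function on (0,∞). -/
lemma slope_ineq {D : ℝ → ℝ} (hconc : ConcaveOn ℝ (Set.Ioi 0) D)
    (hnn : ∀ v ∈ Set.Ioi (0:ℝ), 0 ≤ D v) {s t : ℝ} (hs : 0 < s) (hst : s ≤ t) :
    s * D t ≤ t * D s := by
  rcases eq_or_lt_of_le hst with rfl | hlt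
  · ring_nf; exact le_refl _
  have ht : 0 < t := hs.trans hlt
  have key : ∀ ε ∈ Set.Ioo (0:ℝ) s, (s - ε) / (t - ε) * D t ≤ D s := by
    intro ε hε
    obtain ⟨hε0, hεs⟩ := hε
    have hεt : ε < t := hεs.trans hlt
    have htε : 0 < t - ε := by linarith
    have ha : (0:ℝ) ≤ (t - s) / (t - ε) := div_nonneg (by linarith) htε.le
    have hb : (0:ℝ) ≤ (s - ε) / (t - ε) := div_nonneg (by linarith) htε.le
    have hab : (t - s) / (t - ε) + (s - ε) / (t - ε) = 1 := by
      field_simp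
      ring
    have hcomb := hconc.2 (Set.mem_Ioi.mpr hε0) (Set.mem_Ioi.mpr ht) ha hb hab
    simp only [smul_eq_mul] at hcomb
    have hxy : (t - s) / (t - ε) * ε + (s - ε) / (t - ε) * t = s := by
      field_simp
      ring
    rw [hxy] at hcomb
    have hDε : 0 ≤ D ε := hnn ε hε0
    have : (0:ℝ) ≤ (t - s) / (t - ε) * D ε := mul_nonneg ha hDε
    calc (s - ε) / (t - ε) * D t ≤ (t - s) / (t - ε) * D ε + (s - ε) / (t - ε) * D t := by linarith
    _ ≤ D s := hcomb
  have htend : Filter.Tendsto (fun ε : ℝ => (s - ε) / (t - ε) * D t)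
      (nhdsWithin 0 (Set.Ioi 0)) (nhds ((s - 0) / (t - 0) * D t)) := by
    apply Filter.Tendsto.mono_left _ nhdsWithin_le_nhds
    apply ContinuousAt.tendsto
    apply ContinuousAt.mul _ continuousAt_const
    exact ContinuousAt.div (by fun_prop) (by fun_prop) (by simpa using ne_of_gt ht)
  have hlim : (s - 0) / (t - 0) * D t ≤ D s := by
    refine le_of_tendsto htend ?_
    filter_upwards [Ioo_mem_nhdsGT_of_mem (by constructor <;> [exact le_refl 0; exact hs])]
      with ε hε using key ε hε
  rw [sub_zero, sub_zero, div_mul_eq_mul_div, div_le_iff₀ ht] at hlim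
  linarith [hlim]

lemma ecf_nonneg {D : ℝ → ℝ} (hnn : ∀ v ∈ Set.Ioi (0:ℝ), 0 ≤ D v) {a b : ℝ}
    (ha : 0 < a) (hb : 0 < b) : 0 ≤ ECF D a b := by
  have : 0 < a + b := by linarith
  exact mul_nonneg (div_nonneg (hnn _ this) this.le) ha.le

lemma ecf_mono_fst {D : ℝ → ℝ} (hmono : Monotone D) (hnn : ∀ v ∈ Set.Ioi (0:ℝ), 0 ≤ D v)
    {a a' b : ℝ} (ha : 0 < a) (haa : a ≤ a') (hb : 0 < b) :
    ECF D a b ≤ ECF D a' b := by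
  have hab : 0 < a + b := by linarith
  have hab' : 0 < a' + b := by linarith
  have h1 : ECF D a b = D (a + b) * (a / (a + b)) := by rw [ECF]; ring
  have h2 : ECF D a' b = D (a' + b) * (a' / (a' + b)) := by rw [ECF]; ring
  rw [h1, h2]
  apply mul_le_mul (hmono (by linarith)) _ (div_nonneg ha.le hab.le) (hnn _ hab')
  rw [div_le_div_iff₀ hab hab']
  nlinarith

lemma ecf_anti_snd {D : ℝ → ℝ} (hconc : ConcaveOn ℝ (Set.Ioi 0) D)
    (hnn : ∀ v ∈ Set.Ioi (0:ℝ), 0 ≤ D v) {a b b' : ℝ}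
    (ha : 0 < a) (hb : 0 < b) (hbb : b ≤ b') :
    ECF D a b' ≤ ECF D a b := by
  have hab : 0 < a + b := by linarith
  have hab' : 0 < a + b' := by linarith
  have := slope_ineq hconc hnn hab (by linarith : a + b ≤ a + b')
  unfold ECF
  apply mul_le_mul_of_nonneg_right _ ha.le
  rw [div_le_div_iff₀ hab' hab]
  nlinarith

/-- Compression induces nonpositive covariance between independent envelopes:
Cov(Ĉ(V₁|V₂), Ĉ(V₂|V₁)) ≤ 0, i.e. E[Ĉ(V₁|V₂)·Ĉ(V₂|V₁)] ≤ E[Ĉ(V₁|V₂)]·E[Ĉ(V₂|V₁)]. -/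
theorem ecf_cov_nonpos
    {Ω : Type*} [MeasurableSpace Ω] (μ : Measure Ω) [IsProbabilityMeasure μ]
    (C : ℝ → ℝ) (hC : IsCompressionFunction C)
    (V₁ V₂ : Ω → ℝ) (hV₁ : Measurable V₁) (hV₂ : Measurable V₂)
    (hIndep : IndepFun V₁ V₂ μ)
    (hV₁pos : ∀ᵐ ω ∂μ, 0 < V₁ ω) (hV₂pos : ∀ᵐ ω ∂μ, 0 < V₂ ω)
    (hInt₁ : Integrable (fun ω => ECF C (V₁ ω) (V₂ ω)) μ)
    (hInt₂ : Integrable (fun ω => ECF C (V₂ ω) (V₁ ω)) μ)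
    (hInt₁₂ : Integrable (fun ω => ECF C (V₁ ω) (V₂ ω) * ECF C (V₂ ω) (V₁ ω)) μ) :
    ∫ ω, ECF C (V₁ ω) (V₂ ω) * ECF C (V₂ ω) (V₁ ω) ∂μ ≤
      (∫ ω, ECF C (V₁ ω) (V₂ ω) ∂μ) * ∫ ω, ECF C (V₂ ω) (V₁ ω) ∂μ := by
  obtain ⟨hCnn, hCmono, hCconc⟩ := hC
  set D : ℝ → ℝ := fun x => if 0 < x then C x else sInf (C '' Set.Ioi 0) with hDdef
  have hDeq : ∀ x ∈ Set.Ioi (0:ℝ), D x = C x := fun x hx => if_pos hx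
  have hDmono : Monotone D := by
    intro x y hxy
    by_cases hx : 0 < x
    · have hy : 0 < y := lt_of_lt_of_le hx hxy
      simp only [hDdef, if_pos hx, if_pos hy]
      exact hCmono hx hy hxy
    · by_cases hy : 0 < y
      · simp only [hDdef, if_neg hx, if_pos hy]
        exact csInf_le ⟨0, fun z hz => by obtain ⟨v, hv, rfl⟩ := hz; exact hCnn v hv⟩
          ⟨y, hy, rfl⟩
      · simp [hDdef, if_neg hx, if_neg hy]
  have hDnn : ∀ v ∈ Set.Ioi (0:ℝ), 0 ≤ D v := fun v hv => (hDeq v hv) ▸ hCnn v hv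
  have hDconc : ConcaveOn ℝ (Set.Ioi 0) D := by
    refine ⟨convex_Ioi 0, fun x hx y hy a b ha hb hab => ?_⟩
    have hxy := (convex_Ioi (0:ℝ)) hx hy ha hb hab
    rw [hDeq _ hx, hDeq _ hy, hDeq _ hxy]
    exact hCconc.2 hx hy ha hb hab
  have hDm : Measurable D := hDmono.measurable
  have hECFeq : ∀ a b : ℝ, 0 < a → 0 < b → ECF C a b = ECF D a b := by
    intro a b ha hb
    unfold ECF
    rw [hDeq _ (Set.mem_Ioi.mpr (by linarith))]
  set ν₁ := μ.map V₁ with hν₁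
  set ν₂ := μ.map V₂ with hν₂
  haveI : IsProbabilityMeasure ν₁ := Measure.isProbabilityMeasure_map hV₁.aemeasurable
  haveI : IsProbabilityMeasure ν₂ := Measure.isProbabilityMeasure_map hV₂.aemeasurable
  have hmap : μ.map (fun ω => (V₁ ω, V₂ ω)) = ν₁.prod ν₂ :=
    (indepFun_iff_map_prod_eq_prod_map_map hV₁.aemeasurable hV₂.aemeasurable).mp hIndep
  have hν₁pos : ∀ᵐ x ∂ν₁, 0 < x :=
    (ae_map_iff hV₁.aemeasurable (measurableSet_Ioi : MeasurableSet (Set.Ioi (0:ℝ)))).mpr hV₁pos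
  have hν₂pos : ∀ᵐ x ∂ν₂, 0 < x :=
    (ae_map_iff hV₂.aemeasurable (measurableSet_Ioi : MeasurableSet (Set.Ioi (0:ℝ)))).mpr hV₂pos
  set F : ℝ × ℝ → ℝ := fun p => ECF D p.1 p.2 with hFdef
  set G : ℝ × ℝ → ℝ := fun p => ECF D p.2 p.1 with hGdef
  have hFm : Measurable F := by
    apply Measurable.mul _ measurable_fst
    exact (hDm.comp (measurable_fst.add measurable_snd)).div (measurable_fst.add measurable_snd)
  have hGm : Measurable G := by
    apply Measurable.mul _ measurable_snd
    exact (hDm.comp (measurable_snd.add measurable_fst)).div (measurable_snd.add measurable_fst)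
  have hpairm : AEMeasurable (fun ω => (V₁ ω, V₂ ω)) μ := (hV₁.prodMk hV₂).aemeasurable
  have haeF : (fun ω => ECF C (V₁ ω) (V₂ ω)) =ᵐ[μ] fun ω => F (V₁ ω, V₂ ω) := by
    filter_upwards [hV₁pos, hV₂pos] with ω h1 h2
    exact hECFeq _ _ h1 h2
  have haeG : (fun ω => ECF C (V₂ ω) (V₁ ω)) =ᵐ[μ] fun ω => G (V₁ ω, V₂ ω) := by
    filter_upwards [hV₁pos, hV₂pos] with ω h1 h2
    exact hECFeq _ _ h2 h1
  have haeFG : (fun ω => ECF C (V₁ ω) (V₂ ω) * ECF C (V₂ ω) (V₁ ω)) =ᵐ[μ]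
      fun ω => F (V₁ ω, V₂ ω) * G (V₁ ω, V₂ ω) := by
    filter_upwards [haeF, haeG] with ω h1 h2
    rw [h1, h2]
  have hFint : Integrable F (ν₁.prod ν₂) := by
    rw [← hmap, integrable_map_measure hFm.aestronglyMeasurable hpairm]
    exact hInt₁.congr haeF
  have hGint : Integrable G (ν₁.prod ν₂) := by
    rw [← hmap, integrable_map_measure hGm.aestronglyMeasurable hpairm]
    exact hInt₂.congr haeG
  have hFGint : Integrable (fun p => F p * G p) (ν₁.prod ν₂) := by
    rw [← hmap, integrable_map_measure (show Measurable (fun p => F p * G p) from hFm.mul hGm).aestronglyMeasurable hpairm]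
    exact hInt₁₂.congr haeFG
  have hIF : ∫ ω, ECF C (V₁ ω) (V₂ ω) ∂μ = ∫ p, F p ∂(ν₁.prod ν₂) := by
    rw [integral_congr_ae haeF, ← hmap, integral_map hpairm hFm.aestronglyMeasurable]
  have hIG : ∫ ω, ECF C (V₂ ω) (V₁ ω) ∂μ = ∫ p, G p ∂(ν₁.prod ν₂) := by
    rw [integral_congr_ae haeG, ← hmap, integral_map hpairm hGm.aestronglyMeasurable]
  have hIFG : ∫ ω, ECF C (V₁ ω) (V₂ ω) * ECF C (V₂ ω) (V₁ ω) ∂μ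
      = ∫ p, F p * G p ∂(ν₁.prod ν₂) := by
    rw [integral_congr_ae haeFG, ← hmap,
      integral_map hpairm (show Measurable (fun p => F p * G p) from hFm.mul hGm).aestronglyMeasurable]
  -- positivity on product measures
  have hfst₂ : (ν₂.prod ν₂).map Prod.fst = ν₂ := by simp
  have hsnd₂ : (ν₂.prod ν₂).map Prod.snd = ν₂ := by simp
  have hprodpos₂ : ∀ᵐ p ∂(ν₂.prod ν₂), 0 < p.1 ∧ 0 < p.2 := by
    have h1 : ∀ᵐ p ∂(ν₂.prod ν₂), 0 < p.1 :=
      ae_of_ae_map measurable_fst.aemeasurable (by rw [hfst₂]; exact hν₂pos)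
    have h2 : ∀ᵐ p ∂(ν₂.prod ν₂), 0 < p.2 :=
      ae_of_ae_map measurable_snd.aemeasurable (by rw [hsnd₂]; exact hν₂pos)
    filter_upwards [h1, h2] with p h1 h2 using ⟨h1, h2⟩
  -- the good set
  have hgood : ∀ᵐ a ∂ν₁, 0 < a ∧ Integrable (fun b => F (a, b)) ν₂ ∧
      Integrable (fun b => G (a, b)) ν₂ ∧ Integrable (fun b => F (a, b) * G (a, b)) ν₂ := by
    filter_upwards [hν₁pos, hFint.prod_right_ae, hGint.prod_right_ae, hFGint.prod_right_ae]
      with a h1 h2 h3 h4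
    exact ⟨h1, h2, h3, h4⟩
  set φ : ℝ → ℝ := fun a => ∫ b, F (a, b) ∂ν₂ with hφdef
  set ψ : ℝ → ℝ := fun a => ∫ b, G (a, b) ∂ν₂ with hψdef
  have hφint : Integrable φ ν₁ := hFint.integral_prod_left
  have hψint : Integrable ψ ν₁ := hGint.integral_prod_left
  have hφnn : ∀ a : ℝ, 0 < a → 0 ≤ φ a := fun a ha => integral_nonneg_of_ae
    (by filter_upwards [hν₂pos] with b hb; exact ecf_nonneg hDnn ha hb)
  have hψnn : ∀ a : ℝ, 0 < a → 0 ≤ ψ a := fun a ha => integral_nonneg_of_ae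
    (by filter_upwards [hν₂pos] with b hb; exact ecf_nonneg hDnn hb ha)
  have hφmono : ∀ a a' : ℝ, (0 < a ∧ Integrable (fun b => F (a, b)) ν₂ ∧
      Integrable (fun b => G (a, b)) ν₂ ∧ Integrable (fun b => F (a, b) * G (a, b)) ν₂) →
      (0 < a' ∧ Integrable (fun b => F (a', b)) ν₂ ∧
      Integrable (fun b => G (a', b)) ν₂ ∧ Integrable (fun b => F (a', b) * G (a', b)) ν₂) →
      a ≤ a' → φ a ≤ φ a' := by
    rintro a a' ⟨ha, hFa, -, -⟩ ⟨ha', hFa', -, -⟩ haa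
    apply integral_mono_ae hFa hFa'
    filter_upwards [hν₂pos] with b hb
    exact ecf_mono_fst hDmono hDnn ha haa hb
  have hψanti : ∀ a a' : ℝ, (0 < a ∧ Integrable (fun b => F (a, b)) ν₂ ∧
      Integrable (fun b => G (a, b)) ν₂ ∧ Integrable (fun b => F (a, b) * G (a, b)) ν₂) →
      (0 < a' ∧ Integrable (fun b => F (a', b)) ν₂ ∧
      Integrable (fun b => G (a', b)) ν₂ ∧ Integrable (fun b => F (a', b) * G (a', b)) ν₂) →
      a ≤ a' → ψ a' ≤ ψ a := by
    rintro a a' ⟨ha, -, hGa, -⟩ ⟨ha', -, hGa', -⟩ haa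
    apply integral_mono_ae hGa' hGa
    filter_upwards [hν₂pos] with b hb
    exact ecf_anti_snd hDconc hDnn hb ha haa
  obtain ⟨a₀, ha₀⟩ := hgood.exists
  have hbound : ∀ᵐ a ∂ν₁, ‖φ a * ψ a‖ ≤ φ a₀ * ψ a + ψ a₀ * φ a := by
    filter_upwards [hgood] with a ha
    have h1 : 0 ≤ φ a := hφnn a ha.1
    have h2 : 0 ≤ ψ a := hψnn a ha.1
    have h3 : 0 ≤ φ a₀ := hφnn a₀ ha₀.1
    have h4 : 0 ≤ ψ a₀ := hψnn a₀ ha₀.1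
    rw [Real.norm_of_nonneg (mul_nonneg h1 h2)]
    rcases le_total a a₀ with hle | hle
    · have h5 : φ a ≤ φ a₀ := hφmono a a₀ ha ha₀ hle
      nlinarith
    · have h5 : ψ a ≤ ψ a₀ := hψanti a₀ a ha₀ ha hle
      nlinarith
  have hφψint : Integrable (fun a => φ a * ψ a) ν₁ :=
    Integrable.mono' ((hψint.const_mul (φ a₀)).add (hφint.const_mul (ψ a₀)))
      (hφint.1.mul hψint.1) hbound
  have hinner : ∀ᵐ a ∂ν₁, ∫ b, F (a, b) * G (a, b) ∂ν₂ ≤ φ a * ψ a := by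
    filter_upwards [hgood] with a ha
    obtain ⟨hapos, hFa, hGa, hFGa⟩ := ha
    apply chebyshev_aux ν₂ _ _ hFa hGa hFGa
    filter_upwards [hprodpos₂] with p hp
    obtain ⟨hp1, hp2⟩ := hp
    rcases le_total p.1 p.2 with hle | hle
    · have h1 : F (a, p.2) ≤ F (a, p.1) := ecf_anti_snd hDconc hDnn hapos hp1 hle
      have h2 : G (a, p.1) ≤ G (a, p.2) := ecf_mono_fst hDmono hDnn hp1 hle hapos
      exact mul_nonpos_of_nonneg_of_nonpos (by linarith) (by linarith)
    · have h1 : F (a, p.1) ≤ F (a, p.2) := ecf_anti_snd hDconc hDnn hapos hp2 hle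
      have h2 : G (a, p.2) ≤ G (a, p.1) := ecf_mono_fst hDmono hDnn hp2 hle hapos
      exact mul_nonpos_of_nonpos_of_nonneg (by linarith) (by linarith)
  have hfst₁ : (ν₁.prod ν₁).map Prod.fst = ν₁ := by simp
  have hsnd₁ : (ν₁.prod ν₁).map Prod.snd = ν₁ := by simp
  have houter : ∫ a, φ a * ψ a ∂ν₁ ≤ (∫ a, φ a ∂ν₁) * ∫ a, ψ a ∂ν₁ := by
    apply chebyshev_aux ν₁ φ ψ hφint hψint hφψint
    have hg1 : ∀ᵐ p ∂(ν₁.prod ν₁), 0 < p.1 ∧ Integrable (fun b => F (p.1, b)) ν₂ ∧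
        Integrable (fun b => G (p.1, b)) ν₂ ∧ Integrable (fun b => F (p.1, b) * G (p.1, b)) ν₂ :=
      ae_of_ae_map measurable_fst.aemeasurable (by rw [hfst₁]; exact hgood)
    have hg2 : ∀ᵐ p ∂(ν₁.prod ν₁), 0 < p.2 ∧ Integrable (fun b => F (p.2, b)) ν₂ ∧
        Integrable (fun b => G (p.2, b)) ν₂ ∧ Integrable (fun b => F (p.2, b) * G (p.2, b)) ν₂ :=
      ae_of_ae_map measurable_snd.aemeasurable (by rw [hsnd₁]; exact hgood)
    filter_upwards [hg1, hg2] with p h1 h2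
    rcases le_total p.1 p.2 with hle | hle
    · have hφ' : φ p.1 ≤ φ p.2 := hφmono p.1 p.2 h1 h2 hle
      have hψ' : ψ p.2 ≤ ψ p.1 := hψanti p.1 p.2 h1 h2 hle
      exact mul_nonpos_of_nonpos_of_nonneg (by linarith) (by linarith)
    · have hφ' : φ p.2 ≤ φ p.1 := hφmono p.2 p.1 h2 h1 hle
      have hψ' : ψ p.1 ≤ ψ p.2 := hψanti p.2 p.1 h2 h1 hle
      exact mul_nonpos_of_nonneg_of_nonpos (by linarith) (by linarith)
  rw [hIF, hIG, hIFG]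
  calc ∫ p, F p * G p ∂(ν₁.prod ν₂)
      = ∫ a, ∫ b, F (a, b) * G (a, b) ∂ν₂ ∂ν₁ := integral_prod _ hFGint
    _ ≤ ∫ a, φ a * ψ a ∂ν₁ :=
        integral_mono_ae hFGint.integral_prod_left hφψint hinner
    _ ≤ (∫ a, φ a ∂ν₁) * ∫ a, ψ a ∂ν₁ := houter
    _ = (∫ p, F p ∂(ν₁.prod ν₂)) * ∫ p, G p ∂(ν₁.prod ν₂) := by
        rw [integral_prod _ hFint, integral_prod _ hGint]
end

section
/- Let C be a compression function, let v₁ > 0 and v₂ ≥ 0, and set vₓ = v₁ + v₂. Suppose C is differentiable at vₓ and C(vₓ) > 0. Then the effective compression slope satisfies ĈS(v₁|v₂) ≥ CS(vₓ). Moreover, equality holds if v₂ = 0, and equality holds for all such v₁, v₂ if C is linear on (0, ∞) (i.e., C(v) = a·v on (0, ∞) for some constant a > 0). -/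
/-- The compression slope CS(v) = C′(v)·v / C(v). -/
noncomputable def CS (C : ℝ → ℝ) (v : ℝ) : ℝ :=
  deriv C v * v / C v

/-- The effective compression slope ĈS(v₁|v₂) = v₁·(∂Ĉ(v₁|v₂)/∂v₁) / Ĉ(v₁|v₂). -/
noncomputable def ECS (C : ℝ → ℝ) (v₁ v₂ : ℝ) : ℝ :=
  v₁ * deriv (fun w => ECF C w v₂) v₁ / ECF C v₁ v₂

-- deriv C s ≥ 0
lemma deriv_nonneg_aux (C : ℝ → ℝ) (hC : IsCompressionFunction C) (s : ℝ) (hs : 0 < s)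
    (hdiff : DifferentiableAt ℝ C s) : 0 ≤ deriv C s := by
  obtain ⟨_, hmono, hconc⟩ := hC
  have h := hconc.slope_le_deriv (x := s) (y := s + 1) hs (by simp; linarith) (by linarith) hdiff
  have hslope : 0 ≤ slope C s (s + 1) := by
    rw [slope_def_field]
    have := hmono (Set.mem_Ioi.2 hs) (Set.mem_Ioi.2 (by linarith : (0:ℝ) < s + 1)) (by linarith)
    apply div_nonneg (by linarith) (by linarith)
  linarith

-- C s - s * deriv C s ≥ 0
lemma tangent_aux (C : ℝ → ℝ) (hC : IsCompressionFunction C) (s : ℝ) (hs : 0 < s)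
    (hdiff : DifferentiableAt ℝ C s) : deriv C s * s ≤ C s := by
  obtain ⟨hnn, hmono, hconc⟩ := hC
  have hd0 : 0 ≤ deriv C s := deriv_nonneg_aux C ⟨hnn, hmono, hconc⟩ s hs hdiff
  by_contra h
  push_neg at h
  set ε := deriv C s * s - C s with hε
  have hεpos : 0 < ε := by linarith
  have hd : 0 < deriv C s := by
    rcases hd0.lt_or_eq with h' | h'
    · exact h'
    · exfalso
      have hCs : 0 ≤ C s := hnn s (Set.mem_Ioi.2 hs)
      nlinarith [hεpos, hCs]
  set t := min (s / 2) (ε / (2 * deriv C s)) with ht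
  have htpos : 0 < t := lt_min (by linarith) (by positivity)
  have hts : t < s := lt_of_le_of_lt (min_le_left _ _) (by linarith)
  have hkey := hconc.deriv_le_slope (x := t) (y := s) (Set.mem_Ioi.2 htpos)
    (Set.mem_Ioi.2 hs) hts hdiff
  rw [slope_def_field] at hkey
  have hst : 0 < s - t := by linarith
  have h1 : deriv C s * (s - t) ≤ C s - C t := by
    calc deriv C s * (s - t) ≤ (C s - C t) / (s - t) * (s - t) := by
          apply mul_le_mul_of_nonneg_right hkey (le_of_lt hst)
      _ = C s - C t := by field_simp
  have hCt : 0 ≤ C t := hnn t (Set.mem_Ioi.2 htpos)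
  have h2 : t ≤ ε / (2 * deriv C s) := min_le_right _ _
  have h3 : t * deriv C s ≤ ε / 2 := by
    rw [le_div_iff₀ (by positivity : (0:ℝ) < 2 * deriv C s)] at h2
    nlinarith
  nlinarith [h1, hCt]

-- ECS formula
lemma ecs_formula (C : ℝ → ℝ) (v₁ v₂ : ℝ) (hv₁ : 0 < v₁) (hv₂ : 0 ≤ v₂)
    (hdiff : DifferentiableAt ℝ C (v₁ + v₂)) (hpos : 0 < C (v₁ + v₂)) :
    ECS C v₁ v₂ = deriv C (v₁ + v₂) * v₁ / C (v₁ + v₂) + v₂ / (v₁ + v₂) := by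
  set s := v₁ + v₂ with hs
  have hspos : 0 < s := by linarith
  have h1 : HasDerivAt (fun w : ℝ => w + v₂) 1 v₁ := (hasDerivAt_id v₁).add_const v₂
  have h2 : HasDerivAt (fun w : ℝ => C (w + v₂)) (deriv C s * 1) v₁ :=
    (hdiff.hasDerivAt).comp v₁ h1
  have h3 : HasDerivAt (fun w : ℝ => C (w + v₂) / (w + v₂))
      ((deriv C s * 1 * s - C s * 1) / s ^ 2) v₁ := h2.div h1 (by positivity)
  have h4 : HasDerivAt (fun w : ℝ => C (w + v₂) / (w + v₂) * w)
      ((deriv C s * 1 * s - C s * 1) / s ^ 2 * v₁ + C s / s * 1) v₁ :=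
    h3.mul (hasDerivAt_id v₁)
  have h5 : deriv (fun w : ℝ => C (w + v₂) / (w + v₂) * w) v₁ =
      (deriv C s * 1 * s - C s * 1) / s ^ 2 * v₁ + C s / s * 1 := h4.deriv
  unfold ECS ECF
  rw [h5]
  have hCs : C (v₁ + v₂) ≠ 0 := ne_of_gt hpos
  field_simp
  ring

/-- The effective compression slope is at least the nominal compression slope:
ĈS(v₁|v₂) ≥ CS(v₁+v₂), with equality when v₂ = 0, and with equality for all
admissible v₁, v₂ whenever C is linear on (0, ∞). -/
theorem ecs_ge_cs (C : ℝ → ℝ) (hC : IsCompressionFunction C)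
    (v₁ v₂ : ℝ) (hv₁ : 0 < v₁) (hv₂ : 0 ≤ v₂)
    (hdiff : DifferentiableAt ℝ C (v₁ + v₂)) (hpos : 0 < C (v₁ + v₂)) :
    ECS C v₁ v₂ ≥ CS C (v₁ + v₂) ∧
    (v₂ = 0 → ECS C v₁ v₂ = CS C (v₁ + v₂)) ∧
    ((∃ a : ℝ, 0 < a ∧ ∀ v : ℝ, 0 < v → C v = a * v) →
      ∀ w₁ w₂ : ℝ, 0 < w₁ → 0 ≤ w₂ → ECS C w₁ w₂ = CS C (w₁ + w₂)) := by
  have hspos : 0 < v₁ + v₂ := by linarith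
  have hform := ecs_formula C v₁ v₂ hv₁ hv₂ hdiff hpos
  refine ⟨?_, ?_, ?_⟩
  · rw [hform]
    unfold CS
    have ht := tangent_aux C hC (v₁ + v₂) hspos hdiff
    rw [ge_iff_le, ← sub_nonneg]
    have heq : deriv C (v₁ + v₂) * v₁ / C (v₁ + v₂) + v₂ / (v₁ + v₂) -
        deriv C (v₁ + v₂) * (v₁ + v₂) / C (v₁ + v₂) =
        v₂ * (C (v₁ + v₂) - deriv C (v₁ + v₂) * (v₁ + v₂)) / ((v₁ + v₂) * C (v₁ + v₂)) := by
      field_simp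
      ring
    rw [heq]
    apply div_nonneg (mul_nonneg hv₂ (by linarith)) (by positivity)
  · intro h
    subst h
    rw [hform]
    unfold CS
    simp
  · rintro ⟨a, ha, hl⟩ w₁ w₂ hw₁ hw₂
    have hswpos : 0 < w₁ + w₂ := by linarith
    have hEq : (fun w => C (w + w₂) / (w + w₂) * w) =ᶠ[nhds w₁] fun w => a * w := by
      filter_upwards [eventually_gt_nhds (show -w₂ < w₁ by linarith)] with w hw
      have hwp : 0 < w + w₂ := by linarith
      rw [hl _ hwp]
      field_simp
    have hd1 : deriv (fun w => C (w + w₂) / (w + w₂) * w) w₁ = a := by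
      rw [hEq.deriv_eq]
      have : HasDerivAt (fun w : ℝ => a * w) (a * 1) w₁ := (hasDerivAt_id w₁).const_mul a
      simpa using this.deriv
    have hCeq : C =ᶠ[nhds (w₁ + w₂)] fun v => a * v := by
      filter_upwards [eventually_gt_nhds hswpos] with v hv
      exact hl v hv
    have hd2 : deriv C (w₁ + w₂) = a := by
      rw [hCeq.deriv_eq]
      have : HasDerivAt (fun v : ℝ => a * v) (a * 1) (w₁ + w₂) := (hasDerivAt_id _).const_mul a
      simpa using this.deriv
    unfold ECS CS ECF
    rw [hd1, hd2, hl _ hswpos]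
    field_simp
end

section
/- Let C be a compression function, let v₁ > 0 and v₂ ≥ 0, and set vₓ = v₁ + v₂. Suppose C is differentiable at vₓ and C(vₓ) > 0. Then the effective compression slope admits the decomposition ĈS(v₁|v₂) = CS(vₓ) + (v₂ / (vₓ·C(vₓ)))·(C(vₓ) − vₓ·C′(vₓ)). -/
/-- Decomposition of the effective compression slope:
ĈS(v₁|v₂) = CS(vₓ) + (v₂ / (vₓ·C(vₓ)))·(C(vₓ) − vₓ·C′(vₓ)), where vₓ = v₁ + v₂. -/
theorem ecs_decomposition (C : ℝ → ℝ) (hC : IsCompressionFunction C)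
    (v₁ v₂ : ℝ) (hv₁ : 0 < v₁) (hv₂ : 0 ≤ v₂)
    (hdiff : DifferentiableAt ℝ C (v₁ + v₂)) (hpos : 0 < C (v₁ + v₂)) :
    ECS C v₁ v₂ = CS C (v₁ + v₂) +
      v₂ / ((v₁ + v₂) * C (v₁ + v₂)) * (C (v₁ + v₂) - (v₁ + v₂) * deriv C (v₁ + v₂)) := by
  have hvx : (0:ℝ) < v₁ + v₂ := by linarith
  have hne : v₁ + v₂ ≠ 0 := ne_of_gt hvx
  have h1 : HasDerivAt (fun w => C (w + v₂)) (deriv C (v₁ + v₂)) v₁ := by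
    have := hdiff.hasDerivAt.comp v₁ ((hasDerivAt_id v₁).add_const v₂)
    simpa [Function.comp_def] using this
  have h2 : HasDerivAt (fun w => w + v₂) 1 v₁ := (hasDerivAt_id v₁).add_const v₂
  have hq : HasDerivAt (fun w => C (w + v₂) / (w + v₂))
      ((deriv C (v₁ + v₂) * (v₁ + v₂) - C (v₁ + v₂) * 1) / (v₁ + v₂) ^ 2) v₁ :=
    h1.div h2 hne
  have hf : HasDerivAt (fun w => ECF C w v₂)
      ((deriv C (v₁ + v₂) * (v₁ + v₂) - C (v₁ + v₂) * 1) / (v₁ + v₂) ^ 2 * v₁ +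
        C (v₁ + v₂) / (v₁ + v₂) * 1) v₁ := by
    have := hq.mul (hasDerivAt_id v₁)
    simpa [ECF, Pi.mul_def] using this
  have hd := hf.deriv
  rw [ECS, CS, hd, ECF]
  have hCne : C (v₁ + v₂) ≠ 0 := ne_of_gt hpos
  have hv₁ne : v₁ ≠ 0 := ne_of_gt hv₁
  field_simp
  ring
end

section
/- Let C be a compression function and let v₂ > 0. Suppose C is differentiable on an open neighborhood of v₂, its derivative C′ is continuous at v₂, and C(v₂) > 0. Then the effective compression slope of the target signal tends to 1 as its level tends to zero: lim_{v₁ → 0⁺} ĈS(v₁|v₂) = 1. -/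
open Filter Set Topology

/-- At very low target level, the effective compression slope approaches 1:
lim_{v₁ → 0⁺} ĈS(v₁|v₂) = 1. -/
theorem ecs_tendsto_one (C : ℝ → ℝ) (hC : IsCompressionFunction C)
    (v₂ : ℝ) (hv₂ : 0 < v₂)
    (U : Set ℝ) (hU : IsOpen U) (hv₂U : v₂ ∈ U)
    (hdiff : ∀ x ∈ U, DifferentiableAt ℝ C x)
    (hderiv_cont : ContinuousAt (deriv C) v₂)
    (hpos : 0 < C v₂) :
    Filter.Tendsto (fun v₁ => ECS C v₁ v₂) (nhdsWithin 0 (Set.Ioi 0)) (nhds 1) := by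
  have hcont : ContinuousAt C v₂ := (hdiff v₂ hv₂U).continuousAt
  have htv : Tendsto (fun v₁ : ℝ => v₁ + v₂) (𝓝[>] 0) (𝓝 v₂) := by
    have h : Tendsto (fun v₁ : ℝ => v₁ + v₂) (𝓝 0) (𝓝 (0 + v₂)) :=
      (continuous_id.add continuous_const).tendsto 0
    rw [zero_add] at h
    exact h.mono_left nhdsWithin_le_nhds
  have hev : ∀ᶠ v₁ in 𝓝[>] (0:ℝ), (v₁ + v₂ ∈ U ∧ 0 < C (v₁ + v₂)) ∧ 0 < v₁ := by
    apply Filter.Eventually.and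
    · refine htv.eventually (p := fun x => x ∈ U ∧ 0 < C x) (Filter.eventually_of_mem
        (Filter.inter_mem (hU.mem_nhds hv₂U)
          (hcont.preimage_mem_nhds (isOpen_Ioi.mem_nhds hpos))) ?_)
      exact fun x hx => ⟨hx.1, hx.2⟩
    · exact eventually_mem_nhdsWithin
  set F : ℝ → ℝ := fun v₁ =>
    1 + v₁ * ((deriv C (v₁ + v₂) * (v₁ + v₂) - C (v₁ + v₂)) / (v₁ + v₂) ^ 2)
      / (C (v₁ + v₂) / (v₁ + v₂)) with hFdef
  have hv₂ne : v₂ ≠ 0 := ne_of_gt hv₂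
  have hFlim : Tendsto F (𝓝[>] (0:ℝ)) (𝓝 1) := by
    have hid : Tendsto (fun v₁ : ℝ => v₁) (𝓝[>] (0:ℝ)) (𝓝 0) :=
      tendsto_id.mono_left nhdsWithin_le_nhds
    have hderiv : Tendsto (fun v₁ : ℝ => deriv C (v₁ + v₂)) (𝓝[>] (0:ℝ)) (𝓝 (deriv C v₂)) :=
      hderiv_cont.tendsto.comp htv
    have hCc : Tendsto (fun v₁ : ℝ => C (v₁ + v₂)) (𝓝[>] (0:ℝ)) (𝓝 (C v₂)) :=
      hcont.tendsto.comp htv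
    have h2 : Tendsto (fun v₁ : ℝ =>
        v₁ * ((deriv C (v₁ + v₂) * (v₁ + v₂) - C (v₁ + v₂)) / (v₁ + v₂) ^ 2)
          / (C (v₁ + v₂) / (v₁ + v₂)))
        (𝓝[>] (0:ℝ))
        (𝓝 (0 * ((deriv C v₂ * v₂ - C v₂) / v₂ ^ 2) / (C v₂ / v₂))) := by
      apply Tendsto.div
      · exact hid.mul (((hderiv.mul htv).sub hCc).div (htv.pow 2) (by positivity))
      · exact hCc.div htv hv₂ne
      · positivity
    have : (0 : ℝ) * ((deriv C v₂ * v₂ - C v₂) / v₂ ^ 2) / (C v₂ / v₂) = 0 := by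
      simp
    rw [this] at h2
    have := (tendsto_const_nhds (x := (1:ℝ)) (f := 𝓝[>] (0:ℝ))).add h2
    simpa using this
  refine hFlim.congr' ?_
  filter_upwards [hev] with v₁ hv₁
  obtain ⟨⟨hUm, hCpos⟩, hv₁pos⟩ := hv₁
  have hsum : (0:ℝ) < v₁ + v₂ := by linarith
  have hsumne : v₁ + v₂ ≠ 0 := ne_of_gt hsum
  have hCne : C (v₁ + v₂) ≠ 0 := ne_of_gt hCpos
  have hv₁ne : v₁ ≠ 0 := ne_of_gt hv₁pos
  -- compute the derivative of w ↦ ECF C w v₂ at v₁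
  have hC' : HasDerivAt C (deriv C (v₁ + v₂)) (v₁ + v₂) := (hdiff _ hUm).hasDerivAt
  have h1 : HasDerivAt (fun w : ℝ => C (w + v₂)) (deriv C (v₁ + v₂)) v₁ := by
    have := hC'.comp v₁ ((hasDerivAt_id v₁).add_const v₂)
    simpa [Function.comp_def] using this
  have hden : HasDerivAt (fun w : ℝ => w + v₂) 1 v₁ := (hasDerivAt_id v₁).add_const v₂
  have hdiv : HasDerivAt (fun w : ℝ => C (w + v₂) / (w + v₂))
      ((deriv C (v₁ + v₂) * (v₁ + v₂) - C (v₁ + v₂) * 1) / (v₁ + v₂) ^ 2) v₁ :=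
    h1.div hden hsumne
  have hmul : HasDerivAt (fun w : ℝ => C (w + v₂) / (w + v₂) * w)
      ((deriv C (v₁ + v₂) * (v₁ + v₂) - C (v₁ + v₂) * 1) / (v₁ + v₂) ^ 2 * v₁
        + C (v₁ + v₂) / (v₁ + v₂) * 1) v₁ :=
    hdiv.mul (hasDerivAt_id v₁)
  have hderiv_eq : deriv (fun w => ECF C w v₂) v₁ =
      (deriv C (v₁ + v₂) * (v₁ + v₂) - C (v₁ + v₂) * 1) / (v₁ + v₂) ^ 2 * v₁
        + C (v₁ + v₂) / (v₁ + v₂) * 1 := by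
    have : (fun w => ECF C w v₂) = fun w : ℝ => C (w + v₂) / (w + v₂) * w := rfl
    rw [this, hmul.deriv]
  show F v₁ = ECS C v₁ v₂
  rw [ECS, ECF, hderiv_eq, hFdef]
  field_simp
  ring
end

section
/- Let C be a compression function such that the gain function v ↦ C(v)/v is convex on (0, ∞). Then for every fixed v₂ ≥ 0, the map v₁ ↦ Ĉ(v₁|v₂) is concave on (0, ∞). -/
/-- If the gain function C(v)/v is convex on (0, ∞), then for every fixed v₂ ≥ 0
the effective compression function is concave in v₁ on (0, ∞). -/
theorem ecf_concaveOn_fst (C : ℝ → ℝ) (hC : IsCompressionFunction C)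
    (hGain : ConvexOn ℝ (Set.Ioi (0 : ℝ)) (fun v => C v / v))
    (v₂ : ℝ) (hv₂ : 0 ≤ v₂) :
    ConcaveOn ℝ (Set.Ioi (0 : ℝ)) (fun v₁ => ECF C v₁ v₂) := by
  have hsub : Set.Ioi (0 : ℝ) ⊆ (fun z => v₂ + z) ⁻¹' Set.Ioi (0 : ℝ) := by
    intro x hx
    simp only [Set.mem_preimage, Set.mem_Ioi] at *
    linarith
  have h1 : ConcaveOn ℝ (Set.Ioi (0 : ℝ)) (fun v₁ => C (v₁ + v₂)) :=
    (hC.2.2.translate_left v₂).subset hsub (convex_Ioi 0)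
  have h2 : ConcaveOn ℝ (Set.Ioi (0 : ℝ))
      (fun v₁ => -(v₂ • (C (v₁ + v₂) / (v₁ + v₂)))) :=
    (((hGain.translate_left v₂).subset hsub (convex_Ioi 0)).smul hv₂).neg
  refine (h1.add h2).congr fun x hx => ?_
  have hx0 : (0:ℝ) < x + v₂ := by
    have : (0:ℝ) < x := hx
    linarith
  simp only [ECF, smul_eq_mul, Pi.add_apply]
  field_simp
  ring
end

section
/- Let C be a compression function such that C(v) > 0 for all v > 0 and the gain function v ↦ C(v)/v is convex on (0, ∞). Let n ≥ 1, let v₁ : Fin n → ℝ satisfy v₁(t) > 0 for all t, and let v̄₂ > 0 be constant. Define SNR_in = ((1/n)·∑ₜ v₁(t)) / v̄₂ and SNR_out = ((1/n)·∑ₜ Ĉ(v₁(t)|v̄₂)) / ((1/n)·∑ₜ Ĉ(v̄₂|v₁(t))). Then SNR_out ≤ SNR_in. -/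
/-- For a nonnegative concave function on `(0, ∞)`, the gain `C v / v` is antitone. -/
lemma gain_antitone {C : ℝ → ℝ} (hC : IsCompressionFunction C)
    {x y : ℝ} (hx : 0 < x) (hxy : x ≤ y) : C y / y ≤ C x / x := by
  obtain ⟨hCnn, _, hConc⟩ := hC
  rcases eq_or_lt_of_le hxy with rfl | hlt
  · exact le_rfl
  have hy : 0 < y := hx.trans hlt
  -- for every ε ∈ (0, x): C x ≥ (x - ε)/(y - ε) * C y
  have key : ∀ ε : ℝ, 0 < ε → ε < x → (x - ε) / (y - ε) * C y ≤ C x := by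
    intro ε hε hεx
    have hεy : ε < y := hεx.trans hlt
    have hyε : (0:ℝ) < y - ε := by linarith
    have ha : (0:ℝ) ≤ (y - x) / (y - ε) := by
      apply div_nonneg <;> linarith
    have hb : (0:ℝ) ≤ (x - ε) / (y - ε) := by
      apply div_nonneg <;> linarith
    have hab : (y - x) / (y - ε) + (x - ε) / (y - ε) = 1 := by
      rw [← add_div, div_eq_one_iff_eq hyε.ne']; ring
    have := hConc.2 (Set.mem_Ioi.2 hε) (Set.mem_Ioi.2 hy) ha hb hab
    have hcomb : (y - x) / (y - ε) * ε + (x - ε) / (y - ε) * y = x := by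
      rw [div_mul_eq_mul_div, div_mul_eq_mul_div, ← add_div,
        div_eq_iff hyε.ne']; ring
    simp only [smul_eq_mul] at this
    rw [hcomb] at this
    calc (x - ε) / (y - ε) * C y
        ≤ (y - x) / (y - ε) * C ε + (x - ε) / (y - ε) * C y := by
          have := hCnn ε (Set.mem_Ioi.2 hε)
          nlinarith
      _ ≤ C x := this
  -- take ε → 0
  have hlim : C y * x ≤ C x * y := by
    have : ∀ δ : ℝ, 0 < δ → C y * x ≤ C x * y + δ := by
      intro δ hδ
      set ε := min (x / 2) (δ / (C y + 1)) with hεdef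
      have hCynn : 0 ≤ C y := hCnn y (Set.mem_Ioi.2 hy)
      have hε : 0 < ε := lt_min (by linarith) (by positivity)
      have hεx : ε < x := lt_of_le_of_lt (min_le_left _ _) (by linarith)
      have hεy : ε < y := hεx.trans hlt
      have h1 := key ε hε hεx
      -- (x - ε) * C y ≤ C x * (y - ε)
      have h2 : (x - ε) * C y ≤ C x * (y - ε) := by
        have := mul_le_mul_of_nonneg_right h1 (le_of_lt (sub_pos.2 hεy))
        rw [div_mul_eq_mul_div, div_mul_cancel₀] at this
        · linarith
        · linarith
      have hCxnn : 0 ≤ C x := hCnn x (Set.mem_Ioi.2 hx)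
      have hεδ : ε * (C y + 1) ≤ δ := by
        have : ε ≤ δ / (C y + 1) := min_le_right _ _
        calc ε * (C y + 1) ≤ δ / (C y + 1) * (C y + 1) := by
              apply mul_le_mul_of_nonneg_right this; positivity
          _ = δ := by field_simp
      nlinarith
    linarith [le_of_forall_pos_le_add this]
  rw [div_le_div_iff₀ hy hx]
  linarith
/-- Compression of a varying target in constant-envelope noise can only reduce the
long-term SNR: SNR_out ≤ SNR_in. -/
theorem snr_out_le_snr_in (C : ℝ → ℝ) (hC : IsCompressionFunction C)
    (hCpos : ∀ v : ℝ, 0 < v → 0 < C v)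
    (hGain : ConvexOn ℝ (Set.Ioi (0 : ℝ)) (fun v => C v / v))
    (n : ℕ) (hn : 1 ≤ n) (v₁ : Fin n → ℝ) (hv₁ : ∀ t, 0 < v₁ t)
    (v₂ : ℝ) (hv₂ : 0 < v₂) :
    ((1 / (n : ℝ)) * ∑ t, ECF C (v₁ t) v₂) / ((1 / (n : ℝ)) * ∑ t, ECF C v₂ (v₁ t)) ≤
      ((1 / (n : ℝ)) * ∑ t, v₁ t) / v₂ := by
  have hnpos : (0:ℝ) < n := by exact_mod_cast hn
  set g : ℝ → ℝ := fun v => C v / v with hg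
  have hs : ∀ t, 0 < v₁ t + v₂ := fun t => add_pos (hv₁ t) hv₂
  have hgpos : ∀ t, 0 < g (v₁ t + v₂) := fun t => div_pos (hCpos _ (hs t)) (hs t)
  have hE1 : ∀ t, ECF C (v₁ t) v₂ = g (v₁ t + v₂) * v₁ t := fun t => rfl
  have hE2 : ∀ t, ECF C v₂ (v₁ t) = g (v₁ t + v₂) * v₂ := by
    intro t; simp only [ECF, hg, add_comm]
  -- antivary
  have hanti : Antivary v₁ (fun t => g (v₁ t + v₂)) := by
    intro i j hij
    by_contra h
    push_neg at h
    exact absurd hij (not_lt.2 (gain_antitone hC (hs i) (by linarith)))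
  have cheb := hanti.card_mul_sum_le_sum_mul_sum
  rw [Fintype.card_fin] at cheb
  -- rewrite sums
  simp only [hE1, hE2]
  rw [← Finset.sum_mul]
  set S1 := ∑ t, v₁ t with hS1
  set SG := ∑ t, g (v₁ t + v₂) with hSG
  set SGV := ∑ t, g (v₁ t + v₂) * v₁ t with hSGV
  have hSGpos : 0 < SG := Finset.sum_pos (fun t _ => hgpos t) ⟨⟨0, hn⟩, Finset.mem_univ _⟩
  have hS1pos : 0 < S1 := Finset.sum_pos (fun t _ => hv₁ t) ⟨⟨0, hn⟩, Finset.mem_univ _⟩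
  have hcheb' : (n:ℝ) * SGV ≤ S1 * SG := by
    calc (n:ℝ) * SGV = (n:ℝ) * ∑ t, v₁ t * g (v₁ t + v₂) := by
          simp only [hSGV]; congr 1; apply Finset.sum_congr rfl; intros; ring
      _ ≤ S1 * SG := cheb
  rw [div_le_div_iff₀ (by positivity) hv₂]
  have : 1 / (n:ℝ) * SGV * v₂ ≤ 1 / (n:ℝ) * S1 * (1 / (n:ℝ) * (SG * v₂)) := by
    rw [div_mul_eq_mul_div, div_mul_eq_mul_div]
    have h1 : 1 / (n:ℝ) * S1 * (1 / (n:ℝ) * (SG * v₂)) = S1 * SG * v₂ / (n*n) := by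
      field_simp
    rw [h1, div_le_div_iff₀ (by positivity) (by positivity)]
    nlinarith [mul_le_mul_of_nonneg_right hcheb' (le_of_lt (mul_pos hnpos hv₂))]
  linarith
end
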